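/- Let groups G₁,…,Gₙ each consist of a totally ordered list of actions, all of whose actions must succeed for the group to achieve the goal. In an execution policy that interleaves actions from different groups (respecting each group's internal order) and stops when some group completes all its actions successfully, there is an optimal policy (minimizing expected total cost) that executes the groups one at a time: i.e., it never begins an action of a new group before the currently attempted group has either failed or fully succeeded. -/

import Mathlib

open List

variable {n : ℕ}

/-- Expected cost of executing an interleaved schedule of group actions.
`s` is the schedule (each entry names a group; an entry executes the next
remaining action of that group), `rem` gives each group's remaining list of
(cost, success probability) actions, and `alive` records which groups have not
yet failed.  Execution of an action of a dead group is skipped; on a success of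
a group's last action, the whole execution stops (the group has achieved the
goal); on a failure, the group dies. -/
noncomputable def expCost : List (Fin n) → (Fin n → List (ℝ × ℝ)) → (Fin n → Bool) → ℝ
  | [], _, _ => 0
  | g :: rest, rem, alive =>
    if alive g then
      match rem g with
      | [] => expCost rest rem alive
      | (tp : ℝ × ℝ) :: tail =>
          tp.1 +
            tp.2 * (if tail = [] then 0 else expCost rest (Function.update rem g tail) alive) +
            (1 - tp.2) * expCost rest rem (Function.update alive g false)
    else expCost rest rem alive

def Good (rem : Fin n → List (ℝ × ℝ)) : Prop :=
  ∀ g, ∀ tp ∈ rem g, 0 ≤ tp.1 ∧ 0 ≤ tp.2 ∧ tp.2 ≤ 1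

def CntOK (w : List (Fin n)) (rem : Fin n → List (ℝ × ℝ)) : Prop :=
  ∀ g, w.count g ≤ (rem g).length

lemma skip_of_dead (g : Fin n) (rest : List (Fin n)) (rem : Fin n → List (ℝ × ℝ))
    (alive : Fin n → Bool) (h : alive g = false) :
    expCost (g :: rest) rem alive = expCost rest rem alive := by
  simp [expCost, h]

lemma skip_of_nil (g : Fin n) (rest : List (Fin n)) (rem : Fin n → List (ℝ × ℝ))
    (alive : Fin n → Bool) (h2 : rem g = []) :
    expCost (g :: rest) rem alive = expCost rest rem alive := by
  by_cases h : alive g <;> simp [expCost, h, h2]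

lemma cons_eval (g : Fin n) (rest : List (Fin n)) (rem : Fin n → List (ℝ × ℝ))
    (alive : Fin n → Bool) (h : alive g = true) (tp : ℝ × ℝ) (tail : List (ℝ × ℝ))
    (h2 : rem g = tp :: tail) :
    expCost (g :: rest) rem alive = tp.1 +
        tp.2 * (if tail = [] then 0 else expCost rest (Function.update rem g tail) alive) +
        (1 - tp.2) * expCost rest rem (Function.update alive g false) := by
  simp [expCost, h, h2]

lemma good_update {rem : Fin n → List (ℝ × ℝ)} (hG : Good rem) (g : Fin n)
    {tp : ℝ × ℝ} {tail : List (ℝ × ℝ)} (h : rem g = tp :: tail) :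
    Good (Function.update rem g tail) := by
  intro g' tq hm
  by_cases hg : g' = g
  · subst hg
    rw [Function.update_self] at hm
    exact hG g' tq (by rw [h]; exact List.mem_cons_of_mem _ hm)
  · rw [Function.update_of_ne hg] at hm
    exact hG g' tq hm

lemma swap_le {g h : Fin n} (hgh : g ≠ h) (v : List (Fin n))
    (rem : Fin n → List (ℝ × ℝ)) (alive : Fin n → Bool)
    (hG : Good rem) (hlen : 2 ≤ (rem g).length) :
    expCost (h :: g :: v) rem alive ≤ expCost (g :: h :: v) rem alive := by
  obtain ⟨tp, tail, hg⟩ : ∃ tp tail, rem g = tp :: tail := by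
    cases hrg : rem g with
    | nil => rw [hrg] at hlen; simp at hlen
    | cons a b => exact ⟨a, b, rfl⟩
  have htail : tail ≠ [] := by
    rw [hg] at hlen; simp at hlen
    exact List.ne_nil_of_length_pos (by omega)
  have hpt := hG g tp (by rw [hg]; exact List.mem_cons_self)
  cases halg : alive g with
  | false =>
    apply le_of_eq
    rw [show expCost (g :: h :: v) rem alive = expCost (h :: v) rem alive from
      skip_of_dead _ _ _ _ halg]
    cases halh : alive h with
    | false =>
      rw [skip_of_dead _ _ _ _ halh, skip_of_dead _ _ _ _ halg,
        skip_of_dead _ _ _ _ halh]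
    | true =>
      cases hrh : rem h with
      | nil =>
        rw [skip_of_nil _ _ _ _ hrh, skip_of_dead _ _ _ _ halg, skip_of_nil _ _ _ _ hrh]
      | cons sq th =>
        rw [cons_eval h _ _ _ halh sq th hrh, cons_eval h _ _ _ halh sq th hrh,
          skip_of_dead g v (Function.update rem h th) alive halg,
          skip_of_dead g v rem (Function.update alive h false)
            (by rw [Function.update_of_ne hgh]; exact halg)]
  | true =>
    cases halh : alive h with
    | false =>
      apply le_of_eq
      rw [skip_of_dead _ _ _ _ halh, cons_eval g _ _ _ halg tp tail hg,
        cons_eval g _ _ _ halg tp tail hg, if_neg htail, if_neg htail,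
        skip_of_dead h v (Function.update rem g tail) alive halh,
        skip_of_dead h v rem (Function.update alive g false)
          (by rw [Function.update_of_ne hgh.symm]; exact halh)]
    | true =>
      cases hrh : rem h with
      | nil =>
        apply le_of_eq
        rw [skip_of_nil h _ _ _ hrh, cons_eval g _ _ _ halg tp tail hg,
          cons_eval g _ _ _ halg tp tail hg, if_neg htail, if_neg htail,
          skip_of_nil h v (Function.update rem g tail) alive
            (by rw [Function.update_of_ne hgh.symm]; exact hrh),
          skip_of_nil h v rem (Function.update alive g false) hrh]
      | cons sq th =>
        have hqt := hG h sq (by rw [hrh]; exact List.mem_cons_self)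
        rw [cons_eval h _ _ _ halh sq th hrh,
          cons_eval g _ _ _ halg tp tail hg,
          cons_eval g v (Function.update rem h th) alive halg tp tail
            (by rw [Function.update_of_ne hgh]; exact hg),
          cons_eval g v rem (Function.update alive h false)
            (by rw [Function.update_of_ne hgh]; exact halg) tp tail hg,
          cons_eval h v (Function.update rem g tail) alive halh sq th
            (by rw [Function.update_of_ne hgh.symm]; exact hrh),
          cons_eval h v rem (Function.update alive g false)
            (by rw [Function.update_of_ne hgh.symm]; exact halh) sq th hrh,
          Function.update_comm hgh.symm th tail rem,
          Function.update_comm hgh.symm false false alive]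
        simp only [if_neg htail]
        by_cases hth : th = []
        · simp only [if_pos hth]
          set A := expCost v (Function.update (Function.update rem g tail) h th) alive with hA
          set B := expCost v (Function.update rem h th) (Function.update alive g false) with hB
          set C := expCost v (Function.update rem g tail) (Function.update alive h false) with hC
          set D := expCost v rem
            (Function.update (Function.update alive g false) h false) with hD
          nlinarith [mul_nonneg hqt.2.1 hpt.1]
        · simp only [if_neg hth]
          apply le_of_eq
          ring

lemma ctx {X Y : List (Fin n)}
    (hXY : ∀ rem alive, Good rem → CntOK Y rem → expCost X rem alive ≤ expCost Y rem alive) :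
    ∀ (u : List (Fin n)) (rem : Fin n → List (ℝ × ℝ)) (alive : Fin n → Bool),
      Good rem → CntOK (u ++ Y) rem →
      expCost (u ++ X) rem alive ≤ expCost (u ++ Y) rem alive := by
  intro u
  induction u with
  | nil => intro rem alive hG hC; simpa using hXY rem alive hG hC
  | cons x u ih =>
    intro rem alive hG hC
    have hC' : CntOK (u ++ Y) rem := by
      intro g
      have := hC g
      rw [List.cons_append, List.count_cons] at this
      omega
    rw [List.cons_append, List.cons_append]
    cases halx : alive x with
    | false =>
      rw [skip_of_dead _ _ _ _ halx, skip_of_dead _ _ _ _ halx]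
      exact ih rem alive hG hC'
    | true =>
      cases hrx : rem x with
      | nil =>
        exfalso
        have := hC x
        rw [List.cons_append, List.count_cons, hrx] at this
        simp at this
      | cons tp tail =>
        rw [cons_eval x _ _ _ halx tp tail hrx, cons_eval x _ _ _ halx tp tail hrx]
        have hpt := hG x tp (by rw [hrx]; exact List.mem_cons_self)
        have hdeath : expCost (u ++ X) rem (Function.update alive x false) ≤
            expCost (u ++ Y) rem (Function.update alive x false) := ih _ _ hG hC'
        by_cases htail : tail = []
        · simp only [if_pos htail]
          nlinarith
        · simp only [if_neg htail]
          have hsucc : expCost (u ++ X) (Function.update rem x tail) alive ≤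
              expCost (u ++ Y) (Function.update rem x tail) alive := by
            apply ih _ _ (good_update hG x hrx)
            intro g
            by_cases hgx : g = x
            · subst hgx
              have := hC g
              rw [List.cons_append, List.count_cons, hrx] at this
              rw [Function.update_self]
              simp [List.count_append] at this ⊢
              omega
            · rw [Function.update_of_ne hgx]
              exact hC' g
          nlinarith

lemma swap_ctx {g h : Fin n} (hgh : g ≠ h) (u v : List (Fin n)) (hv : 1 ≤ v.count g)
    (rem : Fin n → List (ℝ × ℝ)) (alive : Fin n → Bool)
    (hG : Good rem) (hC : CntOK (u ++ g :: h :: v) rem) :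
    expCost (u ++ h :: g :: v) rem alive ≤ expCost (u ++ g :: h :: v) rem alive := by
  refine ctx (fun rem alive hG hC => swap_le hgh v rem alive hG ?_) u rem alive hG hC
  have := hC g
  simp [List.count_cons, hgh.symm] at this
  omega

lemma count_filter_ne (g y : Fin n) (t : List (Fin n)) :
    (t.filter (fun x => x ≠ g)).count y = if y = g then 0 else t.count y := by
  by_cases hy : y = g
  · subst hy
    rw [if_pos rfl, List.count_eq_zero]
    intro hmem
    simp [List.mem_filter] at hmem
  · rw [if_neg hy]
    exact List.count_filter (by simp [hy])

lemma sink1 (g : Fin n) : ∀ (f : List (Fin n)), (∀ x ∈ f, x ≠ g) → ∀ (k : ℕ), 1 ≤ k →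
    ∀ (V : List (Fin n)) (rem : Fin n → List (ℝ × ℝ)) (alive : Fin n → Bool),
    Good rem → CntOK (g :: (f ++ (replicate k g ++ V))) rem →
    expCost (f ++ (replicate (k+1) g ++ V)) rem alive ≤
      expCost (g :: (f ++ (replicate k g ++ V))) rem alive := by
  intro f
  induction f with
  | nil =>
    intro _ k hk V rem alive hG hC
    simp [List.replicate_succ]
  | cons c f ih =>
    intro hf k hk V rem alive hG hC
    have hcg : c ≠ g := hf c (List.mem_cons_self)
    have hstep1 : expCost (c :: g :: (f ++ (replicate k g ++ V))) rem alive ≤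
        expCost (g :: c :: (f ++ (replicate k g ++ V))) rem alive := by
      have := swap_ctx (g := g) (h := c) (fun h => hcg h.symm) [] (f ++ (replicate k g ++ V))
        (by simp [List.count_append, List.count_replicate]; omega) rem alive hG
        (by simpa using hC)
      simpa using this
    have hstep2 : expCost (c :: (f ++ (replicate (k+1) g ++ V))) rem alive ≤
        expCost (c :: (g :: (f ++ (replicate k g ++ V)))) rem alive := by
      have := ctx (X := f ++ (replicate (k+1) g ++ V))
        (Y := g :: (f ++ (replicate k g ++ V)))
        (fun rem alive hG hC => ih (fun x hx => hf x (List.mem_cons_of_mem _ hx)) k hk V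
          rem alive hG hC) [c] rem alive hG ?_
      · simpa using this
      · intro y
        have := hC y
        simp [List.count_cons, List.count_append] at this ⊢
        omega
    calc expCost ((c :: f) ++ (replicate (k+1) g ++ V)) rem alive
        = expCost (c :: (f ++ (replicate (k+1) g ++ V))) rem alive := by simp
      _ ≤ expCost (c :: (g :: (f ++ (replicate k g ++ V)))) rem alive := hstep2
      _ ≤ expCost (g :: c :: (f ++ (replicate k g ++ V))) rem alive := hstep1
      _ = expCost (g :: ((c :: f) ++ (replicate k g ++ V))) rem alive := by simp

lemma sinkLe (g : Fin n) : ∀ (w : List (Fin n)) (hw : w ≠ []), w.getLast hw = g →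
    ∀ (V : List (Fin n)) (rem : Fin n → List (ℝ × ℝ)) (alive : Fin n → Bool),
    Good rem → CntOK (w ++ V) rem →
    expCost ((w.filter (fun x => x ≠ g) ++ replicate (w.count g) g) ++ V) rem alive ≤
      expCost (w ++ V) rem alive := by
  intro w
  induction w with
  | nil => intro hw; exact absurd rfl hw
  | cons x t ih =>
    intro hw hlast V rem alive hG hC
    by_cases ht : t = []
    · subst ht
      have hx : x = g := hlast
      subst hx
      simp [List.filter_cons]
    · have hlast' : t.getLast ht = g := by
        rw [← hlast]; exact (List.getLast_cons ht).symm
      have hstep1 : expCost (x :: ((t.filter (fun x => x ≠ g) ++ replicate (t.count g) g) ++ V))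
          rem alive ≤ expCost (x :: (t ++ V)) rem alive := by
        have := ctx (X := (t.filter (fun x => x ≠ g) ++ replicate (t.count g) g) ++ V)
          (Y := t ++ V) (fun rem alive hG hC => ih ht hlast' V rem alive hG hC)
          [x] rem alive hG (by simpa using hC)
        simpa using this
      by_cases hx : x = g
      · subst hx
        have hct : 1 ≤ t.count x := List.count_pos_iff.mpr (hlast' ▸ List.getLast_mem ht)
        have hsink : expCost (t.filter (fun y => y ≠ x) ++ (replicate (t.count x + 1) x ++ V))
            rem alive ≤
            expCost (x :: (t.filter (fun y => y ≠ x) ++ (replicate (t.count x) x ++ V)))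
            rem alive := by
          apply sink1 x (t.filter (fun y => y ≠ x))
            (fun y hy => by simp [List.mem_filter] at hy; exact hy.2) (t.count x) hct V rem alive hG
          intro y
          have hy := hC y
          have hfc := count_filter_ne x y t
          by_cases hyx : y = x
          · subst hyx
            simp [List.count_cons, List.count_append, List.count_replicate] at hy hfc ⊢
            omega
          · simp [List.count_cons, List.count_append, List.count_replicate, hyx, Ne.symm hyx] at hy hfc ⊢
            omega
        calc expCost (((x :: t).filter (fun y => y ≠ x) ++ replicate ((x :: t).count x) x) ++ V)
              rem alive
            = expCost (t.filter (fun y => y ≠ x) ++ (replicate (t.count x + 1) x ++ V))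
              rem alive := by
              simp [List.filter_cons, List.count_cons, List.append_assoc]
          _ ≤ expCost (x :: (t.filter (fun y => y ≠ x) ++ (replicate (t.count x) x ++ V)))
              rem alive := hsink
          _ = expCost (x :: ((t.filter (fun y => y ≠ x) ++ replicate (t.count x) x) ++ V))
              rem alive := by simp [List.append_assoc]
          _ ≤ expCost (x :: (t ++ V)) rem alive := hstep1
          _ = expCost ((x :: t) ++ V) rem alive := by simp
      · calc expCost (((x :: t).filter (fun y => y ≠ g) ++ replicate ((x :: t).count g) g) ++ V)
              rem alive
            = expCost (x :: ((t.filter (fun y => y ≠ g) ++ replicate (t.count g) g) ++ V))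
              rem alive := by
              simp [List.filter_cons, hx, List.count_cons]
          _ ≤ expCost (x :: (t ++ V)) rem alive := hstep1
          _ = expCost ((x :: t) ++ V) rem alive := by simp

lemma flatMap_congr' {α β : Type*} (l : List α) (f1 f2 : α → List β)
    (h : ∀ x ∈ l, f1 x = f2 x) : l.flatMap f1 = l.flatMap f2 := by
  induction l with
  | nil => rfl
  | cons a l ih =>
    simp only [List.flatMap_cons, h a (List.mem_cons_self),
      ih fun x hx => h x (List.mem_cons_of_mem _ hx)]

lemma count_flatMap_rep (ord : List (Fin n)) (hnd : ord.Nodup) (c : Fin n → ℕ) (y : Fin n) :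
    (ord.flatMap fun x => List.replicate (c x) x).count y = if y ∈ ord then c y else 0 := by
  induction ord with
  | nil => simp
  | cons a ord ih =>
    have hnd' := hnd
    rw [List.nodup_cons] at hnd'
    rw [List.flatMap_cons, List.count_append, ih hnd'.2, List.count_replicate]
    by_cases hya : y = a
    · subst hya
      simp [hnd'.1]
    · simp [hya, Ne.symm hya]

theorem blockLe (w : List (Fin n)) :
    ∃ ord : List (Fin n), ord.Nodup ∧ (∀ x, x ∈ ord ↔ x ∈ w) ∧
      ∀ (V : List (Fin n)) (rem : Fin n → List (ℝ × ℝ)) (alive : Fin n → Bool),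
        Good rem → CntOK (w ++ V) rem →
        expCost ((ord.flatMap fun x => List.replicate (w.count x) x) ++ V) rem alive ≤
          expCost (w ++ V) rem alive := by
  by_cases hw : w = []
  · subst hw
    exact ⟨[], by simp, by simp, by simp⟩
  · have hg : w.getLast hw ∈ w := List.getLast_mem hw
    set g := w.getLast hw with hgdef
    set f := w.filter (fun x => x ≠ g) with hfdef
    have hgf : g ∉ f := by simp [hfdef, List.mem_filter]
    have hmemf : ∀ x, x ∈ f ↔ (x ∈ w ∧ x ≠ g) := by
      intro x; simp [hfdef, List.mem_filter]
    have hflt : f.length < w.length := by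
      have hsub : f.Sublist w := List.filter_sublist
      rcases Nat.lt_or_ge f.length w.length with h | h
      · exact h
      · exfalso
        have : f = w := hsub.eq_of_length (le_antisymm hsub.length_le h)
        rw [← this] at hg
        exact hgf hg
    obtain ⟨ord₀, hnd₀, hmem₀, hcost₀⟩ := blockLe f
    have hgord₀ : g ∉ ord₀ := fun h => hgf ((hmem₀ g).mp h)
    refine ⟨ord₀ ++ [g], ?_, ?_, ?_⟩
    · rw [List.nodup_append]
      exact ⟨hnd₀, List.nodup_singleton g, by
        intro a ha b hb heq
        simp at hb
        rw [heq, hb] at ha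
        exact hgord₀ ha⟩
    · intro x
      simp only [List.mem_append, List.mem_singleton, hmem₀ x, hmemf x]
      constructor
      · rintro (⟨hxw, _⟩ | rfl)
        · exact hxw
        · exact hg
      · intro hxw
        by_cases hxg : x = g
        · right; exact hxg
        · left; exact ⟨hxw, hxg⟩
    · intro V rem alive hG hC
      have hcnt_f : ∀ x, x ∈ ord₀ → w.count x = f.count x := by
        intro x hx
        have hxg : x ≠ g := ((hmemf x).mp ((hmem₀ x).mp hx)).2
        rw [hfdef, count_filter_ne g x w, if_neg hxg]
      have hflat : ((ord₀ ++ [g]).flatMap fun x => List.replicate (w.count x) x) =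
          (ord₀.flatMap fun x => List.replicate (f.count x) x) ++
            List.replicate (w.count g) g := by
        rw [List.flatMap_append]
        simp only [List.flatMap_cons, List.flatMap_nil, List.append_nil]
        rw [flatMap_congr' ord₀ _ _ fun x hx => by rw [hcnt_f x hx]]
      rw [hflat]
      have hCf : CntOK (f ++ (List.replicate (w.count g) g ++ V)) rem := by
        intro y
        have hy := hC y
        have hfc := count_filter_ne g y w
        rw [← hfdef] at hfc
        by_cases hyg : y = g
        · subst hyg
          rw [if_pos rfl] at hfc
          simp [List.count_append, List.count_replicate] at hy ⊢
          omega
        · rw [if_neg hyg] at hfc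
          simp [List.count_append, List.count_replicate, hyg, Ne.symm hyg] at hy ⊢
          omega
      calc expCost (((ord₀.flatMap fun x => List.replicate (f.count x) x) ++
              List.replicate (w.count g) g) ++ V) rem alive
          = expCost ((ord₀.flatMap fun x => List.replicate (f.count x) x) ++
              (List.replicate (w.count g) g ++ V)) rem alive := by
            rw [List.append_assoc]
        _ ≤ expCost (f ++ (List.replicate (w.count g) g ++ V)) rem alive :=
            hcost₀ _ rem alive hG hCf
        _ = expCost ((f ++ List.replicate (w.count g) g) ++ V) rem alive := by
            rw [List.append_assoc]
        _ ≤ expCost (w ++ V) rem alive := sinkLe g w hw rfl V rem alive hG hC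
termination_by w.length
decreasing_by rw [hfdef, hgdef] at hflt; simpa using hflt

/-- A schedule is valid if, respecting each group's internal order, it executes
exactly the actions of each group: group `g` occurs `(L g).length` times. -/
def ValidSchedule (L : Fin n → List (ℝ × ℝ)) (s : List (Fin n)) : Prop :=
  ∀ g : Fin n, s.count g = (L g).length

/-- A block schedule executes the groups one at a time, in the order given by
some permutation of all the groups. -/
def BlockSchedule (L : Fin n → List (ℝ × ℝ)) (s : List (Fin n)) : Prop :=
  ∃ order : List (Fin n), order.Perm (List.finRange n) ∧
    s = order.flatMap (fun g => List.replicate (L g).length g)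

/-- Among all interleaved execution policies (schedules respecting each group's
internal order, stopping when some group completes all its actions), there is an
optimal one—minimizing expected total cost—that executes the groups one at a
time. -/
theorem stmt_12 (L : Fin n → List (ℝ × ℝ))
    (hL : ∀ g, ∀ tp ∈ L g, 0 ≤ tp.1 ∧ 0 < tp.2 ∧ tp.2 ≤ 1) :
    ∃ s : List (Fin n), BlockSchedule L s ∧ ValidSchedule L s ∧
      ∀ s' : List (Fin n), ValidSchedule L s' →
        expCost s L (fun _ => true) ≤ expCost s' L (fun _ => true) := by
  have hGood : Good L := fun g tp hm => ⟨(hL g tp hm).1, le_of_lt (hL g tp hm).2.1, (hL g tp hm).2.2⟩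
  set s₀ : List (Fin n) := (List.finRange n).flatMap (fun g => List.replicate (L g).length g)
    with hs₀
  have hcount0 : ∀ g : Fin n, s₀.count g = (L g).length := by
    intro g
    rw [hs₀, count_flatMap_rep _ (List.nodup_finRange n) _ g, if_pos (List.mem_finRange g)]
  have hvalid_iff : ∀ s : List (Fin n), ValidSchedule L s ↔ s.Perm s₀ := by
    intro s
    rw [List.perm_iff_count]
    constructor
    · intro hv a; rw [hv a, hcount0 a]
    · intro hp a; rw [hp a, hcount0 a]
  obtain ⟨m, hm_mem, hm_min⟩ := Finset.exists_min_image s₀.permutations.toFinset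
    (fun s => expCost s L (fun _ => true))
    ⟨s₀, by simp [List.mem_permutations]⟩
  have hm_perm : m.Perm s₀ := by
    rw [List.mem_toFinset, List.mem_permutations] at hm_mem
    exact hm_mem
  have hm_valid : ValidSchedule L m := (hvalid_iff m).mpr hm_perm
  obtain ⟨ord, hnd, hmem, hcost⟩ := blockLe m
  set w' : List (Fin n) := ord.flatMap (fun x => List.replicate (m.count x) x) with hw'
  have hw'L : w' = ord.flatMap (fun x => List.replicate (L x).length x) :=
    flatMap_congr' _ _ _ (fun x _ => by rw [hm_valid x])
  have hcntw' : ∀ x : Fin n, w'.count x = (L x).length := by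
    intro x
    rw [hw', count_flatMap_rep _ hnd _ x]
    by_cases hx : x ∈ ord
    · rw [if_pos hx, hm_valid x]
    · rw [if_neg hx, ← hm_valid x]
      exact (List.count_eq_zero.mpr (fun hc => hx ((hmem x).mpr hc))).symm
  have hw'_cost : expCost w' L (fun _ => true) ≤ expCost m L (fun _ => true) := by
    have := hcost [] L (fun _ => true) hGood (fun g => by
      rw [List.append_nil, hm_valid g])
    simpa using this
  set extra : List (Fin n) := (List.finRange n).filter (fun x => decide (x ∉ ord)) with hextra
  have hextra_nil : extra.flatMap (fun g => List.replicate (L g).length g) = [] := by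
    rw [flatMap_congr' extra _ (fun _ => ([] : List (Fin n))) ?_]
    · simp
    · intro x hx
      rw [hextra, List.mem_filter] at hx
      have hxord : x ∉ ord := by simpa using hx.2
      have : m.count x = 0 := List.count_eq_zero.mpr (fun hc => hxord ((hmem x).mpr hc))
      rw [← hm_valid x, this, List.replicate_zero]
  refine ⟨w', ⟨ord ++ extra, ?_, ?_⟩, fun g => hcntw' g, ?_⟩
  · rw [List.perm_ext_iff_of_nodup ?_ (List.nodup_finRange n)]
    · intro a
      simp only [List.mem_append, hextra, List.mem_filter]
      constructor
      · intro _; exact List.mem_finRange a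
      · intro _
        by_cases ha : a ∈ ord
        · left; exact ha
        · right; exact ⟨List.mem_finRange a, by simpa using ha⟩
    · rw [List.nodup_append]
      refine ⟨hnd, List.Nodup.filter _ (List.nodup_finRange n), ?_⟩
      intro a ha b hb heq
      rw [hextra, List.mem_filter] at hb
      have : b ∉ ord := by simpa using hb.2
      exact this (heq ▸ ha)
  · rw [List.flatMap_append, hextra_nil, List.append_nil, hw'L]
  · intro s' hs'
    refine le_trans hw'_cost ?_
    exact hm_min s' (by rw [List.mem_toFinset, List.mem_permutations]; exact (hvalid_iff s').mp hs')
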